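/- If G is a directed graph with a weight function w : E → ℝ such that every edge of G lies both in a directed simple cycle of strictly positive total weight and in a directed simple cycle of strictly negative total weight, then the induced cycle pattern ψ_w is not parity-realizable: there is no priority function p : E → ℤ such that for every cycle C, w(C) > 0 iff max_{e∈C} p(e) is even and w(C) < 0 iff max_{e∈C} p(e) is odd. -/

import Mathlib

/-- A directed simple cycle in a digraph given by source and target maps. -/
def IsCycle {V E : Type*} (src tgt : E → V) (es : List E) : Prop :=
  es ≠ [] ∧ es.Chain' (fun e f => tgt e = src f) ∧
    (∀ h : es ≠ [], tgt (es.getLast h) = src (es.head h)) ∧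
    (es.map src).Nodup

theorem stmt9 {V E : Type*} [Fintype E] [Nonempty E] (src tgt : E → V) (w : E → ℝ)
    (hpos : ∀ e : E, ∃ C, IsCycle src tgt C ∧ e ∈ C ∧ 0 < (C.map w).sum)
    (hneg : ∀ e : E, ∃ C, IsCycle src tgt C ∧ e ∈ C ∧ (C.map w).sum < 0) :
    ¬ ∃ p : E → ℤ, ∀ es (m : ℤ), IsCycle src tgt es → (es.map p).maximum = (m : WithBot ℤ) →
        ((0 < (es.map w).sum ↔ Even m) ∧ ((es.map w).sum < 0 ↔ Odd m)) := by
  rintro ⟨p, hp⟩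
  obtain ⟨e, he⟩ := Finite.exists_max p
  have hmax : ∀ C : List E, e ∈ C → (C.map p).maximum = (p e : WithBot ℤ) := by
    intro C heC
    rw [List.maximum_eq_coe_iff]
    exact ⟨List.mem_map_of_mem (f := p) heC, fun a ha => by
      obtain ⟨b, hb, rfl⟩ := List.mem_map.1 ha; exact he b⟩
  obtain ⟨C₁, hC₁, he₁, hw₁⟩ := hpos e
  obtain ⟨C₂, hC₂, he₂, hw₂⟩ := hneg e
  have h1 := (hp C₁ (p e) hC₁ (hmax C₁ he₁)).1.mp hw₁
  have h2 := (hp C₂ (p e) hC₂ (hmax C₂ he₂)).2.mp hw₂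
  exact (Int.not_odd_iff_even.mpr h1) h2
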